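/- Fix a > 0. (1) If w ∈ B_a, then T^me_a(w) ∈ M_a; if moreover w ∈ B*_a, then T^me_a(w) ∈ M*_a, the unique maximizer of T^me_a(w) is a, T^me_a(w)(a) = 2 w(ρ(w)), inf{s ∈ [0,a] : T^me_a(w)(s) = T^me_a(w)(a)/2} = ρ(w), and T^br_a(T^me_a(w)) = w. (2) If w ∈ M_a, then T^br_a(w) ∈ B_a; if moreover w ∈ M*_a, then T^br_a(w) ∈ B*_a, the unique maximizer of T^br_a(w) is γ := inf{s ∈ [0,a] : w(s) = w(a)/2}, T^br_a(w)(γ) = w(a)/2, and T^me_a(T^br_a(w)) = w. -/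

import Mathlib

open Set Filter MeasureTheory Topology UniformConvergence

noncomputable section

/-- Supremum of `f` over the interval `[s,t]`. -/
def maxOn' (f : ℝ → ℝ) (s t : ℝ) : ℝ := sSup (f '' Set.Icc s t)

/-- Infimum of `f` over the interval `[s,t]`. -/
def minOn' (f : ℝ → ℝ) (s t : ℝ) : ℝ := sInf (f '' Set.Icc s t)

/-- `ρ(w)`: the first time in `[0,a]` at which `f` attains its maximum over `[0,a]`. -/
def rho (a : ℝ) (f : ℝ → ℝ) : ℝ := sInf {s | s ∈ Set.Icc 0 a ∧ f s = maxOn' f 0 a}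

/-- membership in `B_a`: continuous bridges of length `a`. -/
def IsBridge (a : ℝ) (f : ℝ → ℝ) : Prop :=
  ContinuousOn f (Set.Icc 0 a) ∧ f 0 = 0 ∧ f a = 0

/-- membership in `B*_a`: bridges whose maximum is attained at a unique point. -/
def IsBridgeStar (a : ℝ) (f : ℝ → ℝ) : Prop :=
  IsBridge a f ∧ ∃! s, s ∈ Set.Icc 0 a ∧ ∀ u ∈ Set.Icc 0 a, f u ≤ f s

/-- membership in `M_a`. -/
def IsMeander (a : ℝ) (f : ℝ → ℝ) : Prop :=
  ContinuousOn f (Set.Icc 0 a) ∧ f 0 = 0 ∧ ∀ s ∈ Set.Icc 0 a, f s ≤ f a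

/-- membership in `M*_a`. -/
def IsMeanderStar (a : ℝ) (f : ℝ → ℝ) : Prop :=
  ContinuousOn f (Set.Icc 0 a) ∧ f 0 = 0 ∧ rho a f = a

/-- The transformation `T^me_a`. -/
def Tme (a : ℝ) (f : ℝ → ℝ) : ℝ → ℝ := fun t =>
  if t ≤ rho a f then f t else f (rho a f) + f (a + rho a f - t)

/-- `γ_{f(a)/2}`: the first time in `[0,a]` at which `f` hits the level `f(a)/2`. -/
def gammaHalf (a : ℝ) (f : ℝ → ℝ) : ℝ := sInf {s | s ∈ Set.Icc 0 a ∧ f s = f a / 2}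

/-- The transformation `T^br_a`. -/
def Tbr (a : ℝ) (f : ℝ → ℝ) : ℝ → ℝ := fun t =>
  if t ≤ gammaHalf a f then f t else f (a + gammaHalf a f - t) - f (gammaHalf a f)

/-- The Brownian scaling map `S_b`. -/
def scaleMap (b : ℝ) (f : ℝ → ℝ) : ℝ → ℝ := fun t => (Real.sqrt b)⁻¹ * f (b * t)

/-- `m^br_t(w)` (for bridges of length `1`). -/
def mbr (f : ℝ → ℝ) (t : ℝ) : ℝ := if t ≤ rho 1 f then maxOn' f 0 t else maxOn' f t 1

/-- `g^br_t(w)`: left endpoint of the excursion of `m^br(w) - w` straddling `t`. -/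
def gbr (f : ℝ → ℝ) (t : ℝ) : ℝ := sSup {s | s ∈ Set.Icc 0 t ∧ mbr f s - f s = 0}

/-- `d^br_t(w)`: right endpoint of the excursion of `m^br(w) - w` straddling `t`,
with the convention `d^br_1(w) = 1`. -/
def dbr (f : ℝ → ℝ) (t : ℝ) : ℝ :=
  if t = 1 then 1 else sInf {s | s ∈ Set.Ioc t 1 ∧ mbr f s - f s = 0}

/-- `r^br_t(w)`: maximum of `m^br(w) - w` over the excursion interval. -/
def rbr (f : ℝ → ℝ) (t : ℝ) : ℝ :=
  sSup ((fun s => mbr f s - f s) '' Set.Icc (gbr f t) (dbr f t))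

/-- `u^br_t(w)`: Lebesgue time spent, up to time `t`, in non-excised excursions. -/
def ubr (f : ℝ → ℝ) (t : ℝ) : ℝ := ∫ s in (0:ℝ)..t, if rbr f s < mbr f s then (1:ℝ) else 0

/-- `α^br_s(w)`, with the convention `α^br_{u^br_1(w)}(w) = 1`. -/
def abr (f : ℝ → ℝ) (s : ℝ) : ℝ :=
  if s = ubr f 1 then 1 else sInf {t | t ∈ Set.Icc (0:ℝ) 1 ∧ s < ubr f t}

/-- `H^br(w)` (as a function; it is relevant on `[0, u^br_1(w)]`). -/
def Hbr (f : ℝ → ℝ) : ℝ → ℝ := fun t => f (abr f t)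

/-- `G^br(w)`. -/
def Gbr (f : ℝ → ℝ) : ℝ → ℝ := if 0 < ubr f 1 then scaleMap (ubr f 1) (Hbr f) else 0

/-- the past-maximum function `w̄`. -/
def pastMax (f : ℝ → ℝ) (t : ℝ) : ℝ := maxOn' f 0 t

/-- `g^me_t(w)`. -/
def gme (f : ℝ → ℝ) (t : ℝ) : ℝ := sSup {s | s ∈ Set.Icc 0 t ∧ pastMax f s - f s = 0}

/-- `d^me_t(w)`, with the convention `d^me_1(w) = 1`. -/
def dme (f : ℝ → ℝ) (t : ℝ) : ℝ :=
  if t = 1 then 1 else sInf {s | s ∈ Set.Ioc t 1 ∧ pastMax f s - f s = 0}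

/-- `r^me_t(w)`. -/
def rme (f : ℝ → ℝ) (t : ℝ) : ℝ :=
  sSup ((fun s => pastMax f s - f s) '' Set.Icc (gme f t) (dme f t))

/-- `u^me_t(w)`. -/
def ume (f : ℝ → ℝ) (t : ℝ) : ℝ :=
  if t ≤ gammaHalf 1 f then ∫ s in (0:ℝ)..t, if rme f s < pastMax f s then (1:ℝ) else 0
  else (∫ s in (0:ℝ)..gammaHalf 1 f, if rme f s < pastMax f s then (1:ℝ) else 0) +
    ∫ s in gammaHalf 1 f..t, if rme f s < pastMax f s - f 1 / 2 then (1:ℝ) else 0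

/-- `α^me_s(w)`, with the convention `α^me_{u^me_1(w)}(w) = 1`. -/
def ame (f : ℝ → ℝ) (s : ℝ) : ℝ :=
  if s = ume f 1 then 1 else sInf {t | t ∈ Set.Icc (0:ℝ) 1 ∧ s < ume f t}

/-- `H^me(w)`. -/
def Hme (f : ℝ → ℝ) : ℝ → ℝ := fun t => f (ame f t)

/-- `G^me(w)`. -/
def Gme (f : ℝ → ℝ) : ℝ → ℝ := if 0 < ume f 1 then scaleMap (ume f 1) (Hme f) else 0

/-- Regularity property (i): uniqueness of one-sided maximizers at rational times. -/
def UniqueOneSidedMax (f : ℝ → ℝ) : Prop :=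
  ∀ t : ℚ, (t : ℝ) ∈ Set.Icc (0:ℝ) 1 →
    (∃! s, s ∈ Set.Icc (0:ℝ) (t:ℝ) ∧ ∀ u ∈ Set.Icc (0:ℝ) (t:ℝ), f u ≤ f s) ∧
    (∃! s, s ∈ Set.Icc ((t:ℝ)) 1 ∧ ∀ u ∈ Set.Icc ((t:ℝ)) 1, f u ≤ f s)

/-- Regularity property (ii): the level `0` is not a strict local minimum of `f` on `[0,1]`. -/
def NoStrictLocalMinAtZero (f : ℝ → ℝ) : Prop :=
  ¬ ∃ t ∈ Set.Icc (0:ℝ) 1, f t = 0 ∧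
      ∃ δ > 0, ∀ s ∈ Set.Icc (0:ℝ) 1, s ≠ t → |s - t| < δ → f t < f s

/-- `w ∈ B^reg_1`. -/
def Regular (f : ℝ → ℝ) : Prop :=
  IsBridge 1 f ∧ UniqueOneSidedMax f ∧ NoStrictLocalMinAtZero f

lemma le_maxOn {f : ℝ → ℝ} {a : ℝ} (hf : ContinuousOn f (Set.Icc 0 a)) :
    ∀ u ∈ Set.Icc 0 a, f u ≤ maxOn' f 0 a := by
  intro u hu
  exact le_csSup (isCompact_Icc.image_of_continuousOn hf).bddAbove ⟨u, hu, rfl⟩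

lemma maxOn_eq {f : ℝ → ℝ} {a s : ℝ} (hs : s ∈ Set.Icc 0 a)
    (hmax : ∀ u ∈ Set.Icc 0 a, f u ≤ f s) : maxOn' f 0 a = f s :=
  IsGreatest.csSup_eq ⟨⟨s, hs, rfl⟩, by rintro _ ⟨u, hu, rfl⟩; exact hmax u hu⟩

lemma rho_spec {f : ℝ → ℝ} {a : ℝ} (ha : 0 ≤ a) (hf : ContinuousOn f (Set.Icc 0 a)) :
    rho a f ∈ Set.Icc 0 a ∧ f (rho a f) = maxOn' f 0 a := by
  have hS : {s | s ∈ Set.Icc 0 a ∧ f s = maxOn' f 0 a}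
      = Set.Icc 0 a ∩ f ⁻¹' {maxOn' f 0 a} := by
    ext x
    simp only [Set.mem_setOf_eq, Set.mem_inter_iff, Set.mem_preimage, Set.mem_singleton_iff]
  have hclosed : IsClosed {s | s ∈ Set.Icc 0 a ∧ f s = maxOn' f 0 a} := by
    rw [hS]; exact hf.preimage_isClosed_of_isClosed isClosed_Icc isClosed_singleton
  obtain ⟨s, hs, hm⟩ := isCompact_Icc.exists_isMaxOn (nonempty_Icc.mpr ha) hf
  have hne : ({s | s ∈ Set.Icc 0 a ∧ f s = maxOn' f 0 a} : Set ℝ).Nonempty :=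
    ⟨s, hs, (maxOn_eq hs (isMaxOn_iff.mp hm)).symm⟩
  exact hclosed.csInf_mem hne ⟨0, fun x hx => hx.1.1⟩

lemma rho_le {f : ℝ → ℝ} {a s : ℝ} (hs : s ∈ Set.Icc 0 a) (hfs : f s = maxOn' f 0 a) :
    rho a f ≤ s :=
  csInf_le ⟨0, fun x hx => hx.1.1⟩ ⟨hs, hfs⟩

lemma gamma_spec {f : ℝ → ℝ} {a : ℝ} (ha : 0 ≤ a) (hf : ContinuousOn f (Set.Icc 0 a))
    (h0 : f 0 = 0) (hfa : 0 ≤ f a) :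
    gammaHalf a f ∈ Set.Icc 0 a ∧ f (gammaHalf a f) = f a / 2 := by
  have hS : {s | s ∈ Set.Icc 0 a ∧ f s = f a / 2}
      = Set.Icc 0 a ∩ f ⁻¹' {f a / 2} := by
    ext x
    simp only [Set.mem_setOf_eq, Set.mem_inter_iff, Set.mem_preimage, Set.mem_singleton_iff]
  have hclosed : IsClosed {s | s ∈ Set.Icc 0 a ∧ f s = f a / 2} := by
    rw [hS]; exact hf.preimage_isClosed_of_isClosed isClosed_Icc isClosed_singleton
  obtain ⟨s, hs, hfs⟩ := intermediate_value_Icc ha hf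
    (show f a / 2 ∈ Set.Icc (f 0) (f a) by rw [h0]; constructor <;> linarith)
  exact hclosed.csInf_mem ⟨s, hs, hfs⟩ ⟨0, fun x hx => hx.1.1⟩

lemma gamma_le {f : ℝ → ℝ} {a s : ℝ} (hs : s ∈ Set.Icc 0 a) (hfs : f s = f a / 2) :
    gammaHalf a f ≤ s :=
  csInf_le ⟨0, fun x hx => hx.1.1⟩ ⟨hs, hfs⟩

lemma glue_continuousOn {f : ℝ → ℝ} {a c A : ℝ} (hc : c ∈ Set.Icc 0 a)
    (hf : ContinuousOn f (Set.Icc 0 a)) (hA : f c = A + f a) :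
    ContinuousOn (fun t => if t ≤ c then f t else A + f (a + c - t)) (Set.Icc 0 a) := by
  have hG : ContinuousOn (fun t => f (min t c) + f (a + c - max t c) - f a) (Set.Icc 0 a) := by
    apply ContinuousOn.sub _ continuousOn_const
    apply ContinuousOn.add
    · exact hf.comp (continuous_id.min continuous_const).continuousOn
        (fun t ht => ⟨le_min ht.1 hc.1, (min_le_left _ _).trans ht.2⟩)
    · refine hf.comp (continuous_const.sub (continuous_id.max continuous_const)).continuousOn
        (fun t ht => ⟨by have := max_le ht.2 hc.2; linarith [hc.1],
          by have := le_max_right t c; linarith [hc.1]⟩)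
  apply hG.congr
  intro t ht
  dsimp only
  by_cases h : t ≤ c
  · rw [if_pos h, min_eq_left h, max_eq_right h]
    have h2 : a + c - c = a := by ring
    rw [h2]; ring
  · push_neg at h
    rw [if_neg (not_le.mpr h), min_eq_right h.le, max_eq_left h.le, hA]
    ring


/-- the mapping properties of `T^me_a` and `T^br_a` (Remark 9 of the paper). -/
theorem stmt17 (a : ℝ) (ha : 0 < a) (f : ℝ → ℝ) :
    (IsBridge a f →
      IsMeander a (Tme a f) ∧
      (IsBridgeStar a f →
        IsMeanderStar a (Tme a f) ∧
        ((∀ u ∈ Set.Icc 0 a, Tme a f u ≤ Tme a f a) ∧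
          ∀ s ∈ Set.Icc 0 a, (∀ u ∈ Set.Icc 0 a, Tme a f u ≤ Tme a f s) → s = a) ∧
        Tme a f a = 2 * f (rho a f) ∧
        gammaHalf a (Tme a f) = rho a f ∧
        (∀ t ∈ Set.Icc 0 a, Tbr a (Tme a f) t = f t))) ∧
    (IsMeander a f →
      IsBridge a (Tbr a f) ∧
      (IsMeanderStar a f →
        IsBridgeStar a (Tbr a f) ∧
        ((∀ u ∈ Set.Icc 0 a, Tbr a f u ≤ Tbr a f (gammaHalf a f)) ∧
          ∀ s ∈ Set.Icc 0 a, (∀ u ∈ Set.Icc 0 a, Tbr a f u ≤ Tbr a f s) → s = gammaHalf a f) ∧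
        Tbr a f (gammaHalf a f) = f a / 2 ∧
        (∀ t ∈ Set.Icc 0 a, Tme a (Tbr a f) t = f t))) := by
  have ha' : (0:ℝ) ≤ a := ha.le
  constructor
  · -- Part 1
    rintro ⟨hf, h0, hfa⟩
    obtain ⟨hρmem, hρmax⟩ := rho_spec ha' hf
    set ρ := rho a f with hρdef
    have hmaxle : ∀ u ∈ Set.Icc 0 a, f u ≤ f ρ := by
      intro u hu; rw [hρmax]; exact le_maxOn hf u hu
    have hρ0 : 0 ≤ f ρ := by have := hmaxle 0 ⟨le_rfl, ha'⟩; rwa [h0] at this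
    have hTle : ∀ t, t ≤ ρ → Tme a f t = f t := fun t h => if_pos h
    have hTgt : ∀ t, ρ < t → Tme a f t = f ρ + f (a + ρ - t) := fun t h => if_neg (not_le.mpr h)
    have hTa : Tme a f a = 2 * f ρ := by
      rcases eq_or_lt_of_le hρmem.2 with h | h
      · rw [hTle a h.ge, hfa]
        have hz : f ρ = 0 := by rw [h]; exact hfa
        rw [hz]; ring
      · rw [hTgt a h]
        have e : a + ρ - a = ρ := by ring
        rw [e]; ring
    have hmea : ∀ s ∈ Set.Icc 0 a, Tme a f s ≤ Tme a f a := by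
      intro s hs; rw [hTa]
      rcases le_or_gt s ρ with h | h
      · rw [hTle s h]; linarith [hmaxle s hs]
      · rw [hTgt s h]
        have hm : a + ρ - s ∈ Set.Icc 0 a := ⟨by linarith [hρmem.1, hs.2], by linarith⟩
        linarith [hmaxle _ hm]
    have hT0 : Tme a f 0 = 0 := by rw [hTle 0 hρmem.1, h0]
    have hcont : ContinuousOn (Tme a f) (Set.Icc 0 a) :=
      glue_continuousOn hρmem hf (by rw [hfa]; ring)
    refine ⟨⟨hcont, hT0, hmea⟩, ?_⟩
    rintro ⟨-, s₀, ⟨hs₀mem, hs₀max⟩, huniq⟩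
    have hρs₀ : ρ = s₀ := huniq ρ ⟨hρmem, hmaxle⟩
    have hMpos : 0 < f ρ := by
      rcases hρ0.lt_or_eq with h | h
      · exact h
      · exfalso
        have hP0 : (0:ℝ) = s₀ :=
          huniq 0 ⟨⟨le_rfl, ha'⟩, fun u hu => by rw [h0]; linarith [hmaxle u hu]⟩
        have hPa : a = s₀ :=
          huniq a ⟨⟨ha', le_rfl⟩, fun u hu => by rw [hfa]; linarith [hmaxle u hu]⟩
        rw [← hPa] at hP0
        exact absurd hP0 (ne_of_lt ha)
    have hstrict : ∀ u ∈ Set.Icc 0 a, u ≠ ρ → f u < f ρ := by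
      intro u hu hne
      rcases (hmaxle u hu).lt_or_eq with h | h
      · exact h
      · exfalso
        have : u = s₀ := huniq u ⟨hu, fun v hv => by rw [h]; exact hmaxle v hv⟩
        exact hne (this.trans hρs₀.symm)
    have hguniq : ∀ s ∈ Set.Icc 0 a, (∀ u ∈ Set.Icc 0 a, Tme a f u ≤ Tme a f s) → s = a := by
      intro s hs hsmax
      by_contra hne
      have h2 := hsmax a ⟨ha', le_rfl⟩
      rw [hTa] at h2
      rcases le_or_gt s ρ with h | h
      · rw [hTle s h] at h2; linarith [hmaxle s hs]
      · rw [hTgt s h] at h2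
        have hsa : s < a := lt_of_le_of_ne hs.2 hne
        have hm : a + ρ - s ∈ Set.Icc 0 a := ⟨by linarith [hρmem.1], by linarith⟩
        have hne2 : a + ρ - s ≠ ρ := fun hh => hne (by linarith)
        linarith [hstrict _ hm hne2]
    have hmaxg : maxOn' (Tme a f) 0 a = Tme a f a := maxOn_eq ⟨ha', le_rfl⟩ hmea
    have hrhog : rho a (Tme a f) = a := by
      have hset : {s | s ∈ Set.Icc 0 a ∧ Tme a f s = maxOn' (Tme a f) 0 a} = {a} := by
        ext s
        simp only [Set.mem_setOf_eq, Set.mem_singleton_iff]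
        constructor
        · rintro ⟨hs, hgs⟩
          exact hguniq s hs (fun u hu => by rw [hgs, hmaxg]; exact hmea u hu)
        · rintro rfl; exact ⟨⟨ha', le_rfl⟩, hmaxg.symm⟩
      show sInf {s | s ∈ Set.Icc 0 a ∧ Tme a f s = maxOn' (Tme a f) 0 a} = a
      rw [hset, csInf_singleton]
    have hgamma : gammaHalf a (Tme a f) = ρ := by
      have hρin : Tme a f ρ = Tme a f a / 2 := by rw [hTle ρ le_rfl, hTa]; ring
      refine le_antisymm (gamma_le hρmem hρin) ?_
      refine le_csInf ⟨ρ, hρmem, hρin⟩ ?_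
      rintro s ⟨hs, hgs⟩
      by_contra hlt
      push_neg at hlt
      rw [hTle s hlt.le, hTa] at hgs
      have := hstrict s hs hlt.ne
      linarith
    have hTbrme : ∀ t ∈ Set.Icc 0 a, Tbr a (Tme a f) t = f t := by
      intro t ht
      have hgρ : Tme a f ρ = f ρ := hTle ρ le_rfl
      show (if t ≤ gammaHalf a (Tme a f) then Tme a f t
            else Tme a f (a + gammaHalf a (Tme a f) - t) - Tme a f (gammaHalf a (Tme a f))) = f t
      rw [hgamma]
      rcases le_or_gt t ρ with h | h
      · rw [if_pos h, hTle t h]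
      · rw [if_neg (not_le.mpr h), hgρ]
        rcases le_or_gt (a + ρ - t) ρ with h2 | h2
        · have hta : t = a := le_antisymm ht.2 (by linarith)
          rw [hTle _ h2, hta]
          have e : a + ρ - a = ρ := by ring
          rw [e, hfa, sub_self]
        · rw [hTgt _ h2]
          have e : a + ρ - (a + ρ - t) = t := by ring
          rw [e]; ring
    exact ⟨⟨hcont, hT0, hrhog⟩, ⟨hmea, hguniq⟩, hTa, hgamma, hTbrme⟩
  · -- Part 2
    rintro ⟨hf, h0, hle⟩
    have hfa0 : 0 ≤ f a := by have := hle 0 ⟨le_rfl, ha'⟩; linarith [h0]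
    obtain ⟨hγmem, hγval⟩ := gamma_spec ha' hf h0 hfa0
    set γ := gammaHalf a f with hγdef
    have hTble : ∀ t, t ≤ γ → Tbr a f t = f t := fun t h => if_pos h
    have hTbgt : ∀ t, γ < t → Tbr a f t = f (a + γ - t) - f γ := fun t h => if_neg (not_le.mpr h)
    have hcont : ContinuousOn (Tbr a f) (Set.Icc 0 a) := by
      have heq : Tbr a f = fun t => if t ≤ γ then f t else -f γ + f (a + γ - t) := by
        funext t
        show (if t ≤ γ then f t else f (a + γ - t) - f γ) = _
        split
        · rfl
        · ring
      rw [heq]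
      exact glue_continuousOn hγmem hf (by linarith [hγval])
    have hTb0 : Tbr a f 0 = 0 := by rw [hTble 0 hγmem.1, h0]
    have hTba : Tbr a f a = 0 := by
      rcases eq_or_lt_of_le hγmem.2 with h | h
      · rw [hTble a h.ge]
        rw [h] at hγval
        linarith
      · rw [hTbgt a h]
        have e : a + γ - a = γ := by ring
        rw [e, sub_self]
    refine ⟨⟨hcont, hTb0, hTba⟩, ?_⟩
    rintro ⟨-, -, hρa⟩
    have hfamax : f a = maxOn' f 0 a := by
      have := (rho_spec ha' hf).2
      rwa [hρa] at this
    have hstrict : ∀ s ∈ Set.Icc 0 a, s ≠ a → f s < f a := by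
      intro s hs hne
      rcases (hle s hs).lt_or_eq with h | h
      · exact h
      · exfalso
        have : rho a f ≤ s := rho_le hs (h.trans hfamax)
        rw [hρa] at this
        exact hne (le_antisymm hs.2 this)
    have hfapos : 0 < f a := by
      have := hstrict 0 ⟨le_rfl, ha'⟩ (ne_of_lt ha)
      linarith [h0]
    have hγlta : γ < a := by
      rcases eq_or_lt_of_le hγmem.2 with h | h
      · rw [h] at hγval; linarith
      · exact h
    have hbefore : ∀ s ∈ Set.Icc 0 a, s < γ → f s < f a / 2 := by
      intro s hs hsγ
      by_contra hge
      push_neg at hge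
      obtain ⟨u, hu, hfu⟩ := intermediate_value_Icc hs.1
        (hf.mono (Set.Icc_subset_Icc le_rfl hs.2))
        (show f a / 2 ∈ Set.Icc (f 0) (f s) from ⟨by rw [h0]; linarith, hge⟩)
      have : γ ≤ u := gamma_le ⟨hu.1, hu.2.trans hs.2⟩ hfu
      linarith [hu.2]
    have hγval2 : Tbr a f γ = f a / 2 := by rw [hTble γ le_rfl, hγval]
    have hmax : ∀ u ∈ Set.Icc 0 a, Tbr a f u ≤ Tbr a f γ := by
      intro u hu
      rw [hγval2]
      rcases le_or_gt u γ with h | h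
      · rw [hTble u h]
        rcases h.lt_or_eq with h' | h'
        · exact (hbefore u hu h').le
        · rw [h', hγval]
      · rw [hTbgt u h]
        have hm : a + γ - u ∈ Set.Icc 0 a := ⟨by linarith [hγmem.1, hu.2], by linarith⟩
        linarith [hle _ hm, hγval]
    have huniqγ : ∀ s ∈ Set.Icc 0 a, (∀ u ∈ Set.Icc 0 a, Tbr a f u ≤ Tbr a f s) → s = γ := by
      intro s hs hsmax
      by_contra hne
      have h2 := hsmax γ hγmem
      rw [hγval2] at h2
      rcases le_or_gt s γ with h | h
      · have hslt : s < γ := h.lt_of_ne hne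
        rw [hTble s h] at h2
        linarith [hbefore s hs hslt]
      · rw [hTbgt s h] at h2
        have hm : a + γ - s ∈ Set.Icc 0 a := ⟨by linarith [hγmem.1, hs.2], by linarith⟩
        have hne' : a + γ - s ≠ a := fun hh => (absurd (by linarith : s = γ) hne)
        linarith [hstrict _ hm hne', hγval]
    have hmaxh : maxOn' (Tbr a f) 0 a = Tbr a f γ := maxOn_eq hγmem hmax
    have hρh : rho a (Tbr a f) = γ := by
      have hset : {s | s ∈ Set.Icc 0 a ∧ Tbr a f s = maxOn' (Tbr a f) 0 a} = {γ} := by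
        ext s
        simp only [Set.mem_setOf_eq, Set.mem_singleton_iff]
        constructor
        · rintro ⟨hs, hgs⟩
          exact huniqγ s hs (fun u hu => by rw [hgs, hmaxh]; exact hmax u hu)
        · rintro rfl; exact ⟨hγmem, hmaxh.symm⟩
      show sInf {s | s ∈ Set.Icc 0 a ∧ Tbr a f s = maxOn' (Tbr a f) 0 a} = γ
      rw [hset, csInf_singleton]
    have hTmebr : ∀ t ∈ Set.Icc 0 a, Tme a (Tbr a f) t = f t := by
      intro t ht
      show (if t ≤ rho a (Tbr a f) then Tbr a f t
            else Tbr a f (rho a (Tbr a f)) + Tbr a f (a + rho a (Tbr a f) - t)) = f t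
      rw [hρh]
      rcases le_or_gt t γ with h | h
      · rw [if_pos h, hTble t h]
      · rw [if_neg (not_le.mpr h), hγval2]
        rcases le_or_gt (a + γ - t) γ with h2 | h2
        · have hta : t = a := le_antisymm ht.2 (by linarith)
          rw [hTble _ h2, hta]
          have e : a + γ - a = γ := by ring
          rw [e, hγval]
          ring
        · rw [hTbgt _ h2, hγval]
          have e : a + γ - (a + γ - t) = t := by ring
          rw [e]; ring
    exact ⟨⟨⟨hcont, hTb0, hTba⟩, γ, ⟨hγmem, hmax⟩, fun y hy => huniqγ y hy.1 hy.2⟩,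
      ⟨hmax, huniqγ⟩, hγval2, hTmebr⟩
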